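/- Let A be a connected Artin algebra with rad(A)² = 0 and U a simple non-injective A-module. Then the irreducible morphisms from U to indecomposable modules are exactly the embeddings U → P_i into non-simple indecomposable projective modules P_i (as copies of U inside rad P_i). -/

import Mathlib

set_option synthInstance.maxHeartbeats 1000000
set_option maxHeartbeats 4000000


universe u

section
variable (A : Type u) [Ring A]

/-- A split monomorphism of `A`-modules. -/
def IsSplitMonoLM {M N : Type u} [AddCommGroup M] [Module A M] [AddCommGroup N] [Module A N]
    (f : M →ₗ[A] N) : Prop :=
  ∃ g : N →ₗ[A] M, g ∘ₗ f = LinearMap.id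

/-- A split epimorphism of `A`-modules. -/
def IsSplitEpiLM {M N : Type u} [AddCommGroup M] [Module A M] [AddCommGroup N] [Module A N]
    (f : M →ₗ[A] N) : Prop :=
  ∃ g : N →ₗ[A] M, f ∘ₗ g = LinearMap.id

/-- `f` is an irreducible morphism in the category `A-mod` of finite `A`-modules:
it is neither a split monomorphism nor a split epimorphism, and in any factorization
`f = h ∘ g` through a finite module, `g` is a split mono or `h` is a split epi. -/
def IsIrreducibleLM {M N : Type u} [AddCommGroup M] [Module A M] [AddCommGroup N] [Module A N]
    (f : M →ₗ[A] N) : Prop :=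
  ¬ IsSplitMonoLM A f ∧ ¬ IsSplitEpiLM A f ∧
    ∀ (L : Type u) [AddCommGroup L] [Module A L] [Module.Finite A L]
      (g : M →ₗ[A] L) (h : L →ₗ[A] N), f = h ∘ₗ g → IsSplitMonoLM A g ∨ IsSplitEpiLM A h

/-- A module is indecomposable if it is nonzero and its only idempotent endomorphisms are
`0` and the identity. -/
def IsIndecomposableModule (M : Type u) [AddCommGroup M] [Module A M] : Prop :=
  Nontrivial M ∧ ∀ f : M →ₗ[A] M, f ∘ₗ f = f → f = 0 ∨ f = LinearMap.id

end

section Aux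
variable {A : Type u} [Ring A]

lemma exists_finset_max_inf_eq_jacobson [IsArtinianRing A] :
    ∃ t : Finset (Ideal A), (∀ m ∈ t, m.IsMaximal) ∧
      t.inf id = Ideal.jacobson (⊥ : Ideal A) := by
  obtain ⟨I₀, ⟨t₀, ht₀, rfl⟩, hmin⟩ := IsArtinian.set_has_minimal
    {I : Ideal A | ∃ t : Finset (Ideal A), (∀ m ∈ t, m.IsMaximal) ∧ t.inf id = I}
    ⟨⊤, ∅, by simp, by simp⟩
  have hle : ∀ m : Ideal A, m.IsMaximal → t₀.inf id ≤ m := by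
    intro m hm
    classical
    have hmem : t₀.inf id ⊓ m ∈
        {I : Ideal A | ∃ t : Finset (Ideal A), (∀ m ∈ t, m.IsMaximal) ∧ t.inf id = I} := by
      refine ⟨insert m t₀, ?_, ?_⟩
      · intro x hx
        rcases Finset.mem_insert.mp hx with h | h
        · exact h ▸ hm
        · exact ht₀ x h
      · rw [Finset.inf_insert]; exact inf_comm _ _
    have : ¬ (t₀.inf id ⊓ m < t₀.inf id) := hmin _ hmem
    have heq : t₀.inf id ⊓ m = t₀.inf id := by
      rcases lt_or_eq_of_le (inf_le_left : t₀.inf id ⊓ m ≤ t₀.inf id) with h | h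
      · exact absurd h this
      · exact h
    exact inf_eq_left.mp heq
  refine ⟨t₀, ht₀, le_antisymm ?_ ?_⟩
  · exact le_sInf fun J hJ => hle J hJ.2
  · exact Finset.le_inf fun m hm => sInf_le ⟨bot_le, ht₀ m hm⟩

lemma isSemisimpleModule_quot_jacobson [IsArtinianRing A] :
    IsSemisimpleModule A (A ⧸ Ideal.jacobson (⊥ : Ideal A)) := by
  classical
  obtain ⟨t, htmax, htinf⟩ := exists_finset_max_inf_eq_jacobson (A := A)
  set φ : A →ₗ[A] ((i : {x // x ∈ t}) → A ⧸ (i.1 : Ideal A)) :=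
    LinearMap.pi (fun i => Submodule.mkQ (i.1 : Ideal A)) with hφ
  have hker : LinearMap.ker φ = Ideal.jacobson (⊥ : Ideal A) := by
    rw [hφ, LinearMap.ker_pi, ← htinf]
    ext x
    simp only [Submodule.mem_iInf, Finset.inf_eq_iInf, Submodule.ker_mkQ, id]
    exact ⟨fun h i hi => h ⟨i, hi⟩, fun h i => h i.1 i.2⟩
  haveI hsimple : ∀ i : {x // x ∈ t}, IsSimpleModule A (A ⧸ (i.1 : Ideal A)) := fun i =>
    isSimpleModule_iff_isCoatom.mpr (Ideal.isMaximal_def.mp (htmax i.1 i.2))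
  haveI : IsSemisimpleModule A ((i : {x // x ∈ t}) → A ⧸ (i.1 : Ideal A)) := by
    refine IsSemisimpleModule.of_sSup_simples_eq_top ?_
    refine top_unique ?_
    rw [← LinearMap.iSup_range_single (R := A) (φ := fun i : {x // x ∈ t} => A ⧸ (i.1 : Ideal A))]
    refine iSup_le fun i => le_sSup ?_
    have hinj : Function.Injective
        ⇑(LinearMap.single A (fun i : {x // x ∈ t} => A ⧸ (i.1 : Ideal A)) i) := by
      rw [LinearMap.coe_single]
      exact Pi.single_injective i
    haveI := hsimple i
    exact @IsSimpleModule.congr A _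
      (↥(LinearMap.range (LinearMap.single A (fun i : {x // x ∈ t} => A ⧸ (i.1 : Ideal A)) i)))
      _ _ (A ⧸ (i.1 : Ideal A)) _ _
      (LinearEquiv.ofInjective _ hinj).symm (hsimple i)
  have e := LinearMap.quotKerEquivRange φ
  rw [hker] at e
  exact IsSemisimpleModule.congr (R := A) (N := A ⧸ Ideal.jacobson (⊥ : Ideal A))
    (M := ↥(LinearMap.range φ)) e

lemma isSemisimpleModule_of_annihilated (J0 : Ideal A)
    (hq : IsSemisimpleModule A (A ⧸ J0))
    {M : Type u} [AddCommGroup M] [Module A M]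
    (hann : ∀ a ∈ J0, ∀ m : M, a • m = (0 : M)) : IsSemisimpleModule A M := by
  haveI := hq
  have hker : ∀ m : M, J0 ≤ LinearMap.ker (LinearMap.toSpanSingleton A M m) := by
    intro m a ha
    simpa [LinearMap.mem_ker] using hann a ha m
  refine isSemisimpleModule_of_isSemisimpleModule_submodule'
    (p := fun m : M => LinearMap.range (J0.liftQ (LinearMap.toSpanSingleton A M m) (hker m)))
    (fun m => IsSemisimpleModule.range _) ?_
  refine top_unique fun x _ => ?_
  refine Submodule.mem_iSup_of_mem x ⟨Submodule.Quotient.mk 1, ?_⟩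
  simp

lemma exists_retraction {M U : Type u} [AddCommGroup M] [Module A M] [AddCommGroup U]
    [Module A U] [IsSemisimpleModule A M] (j : U →ₗ[A] M) (hj : Function.Injective j) :
    ∃ r : M →ₗ[A] U, r ∘ₗ j = LinearMap.id := by
  obtain ⟨C, hC⟩ := exists_isCompl (LinearMap.range j)
  set e := LinearEquiv.ofInjective j hj with he
  refine ⟨e.symm.toLinearMap ∘ₗ Submodule.projectionOnto _ C hC, ?_⟩
  ext u
  have h1 : j u = ((e u : LinearMap.range j) : M) := rfl
  simp only [LinearMap.comp_apply, LinearMap.id_apply, LinearEquiv.coe_coe]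
  rw [h1, Submodule.projectionOnto_apply_left hC (e u), LinearEquiv.symm_apply_apply]

end Aux

/-- Let `A` be a connected Artin algebra with `rad(A)² = 0` and `U` a simple non-injective
`A`-module.  The irreducible morphisms from `U` to an indecomposable module `N` are exactly
the embeddings of `U` into non-simple indecomposable projective modules (necessarily as a
copy of `U` inside `rad N`). -/
theorem stmt13 (K : Type u) [CommRing K] [IsArtinianRing K]
    (A : Type u) [Ring A] [Algebra K A] [Module.Finite K A]
    (hconn : ∀ e : A, IsIdempotentElem e → e ∈ Set.center A → e = 0 ∨ e = 1)
    (J : Ideal A) (hJdef : J = Ideal.jacobson (⊥ : Ideal A)) (hJ2 : J * J = ⊥)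
    (U : Type u) [AddCommGroup U] [Module A U] [Module.Finite A U]
    (hUsimple : IsSimpleModule A U) (hUnotinj : ¬ Module.Injective A U)
    (N : Type u) [AddCommGroup N] [Module A N] [Module.Finite A N]
    (hNindec : IsIndecomposableModule A N)
    (f : U →ₗ[A] N) :
    IsIrreducibleLM A f ↔
      (Function.Injective f ∧ Module.Projective A N ∧ ¬ IsSimpleModule A N) := by
  haveI := hUsimple
  haveI hUnt : Nontrivial U := IsSimpleModule.nontrivial A U
  haveI hNnt : Nontrivial N := hNindec.1
  rcases subsingleton_or_nontrivial A with hA | hA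
  · haveI := Module.subsingleton A N
    exact absurd hNnt (not_nontrivial N)
  haveI : IsArtinian K A := isArtinian_of_fg_of_artinian'
  haveI : IsArtinianRing A := isArtinian_of_tower K inferInstance
  have hqss : IsSemisimpleModule A (A ⧸ J) := by
    rw [hJdef]; exact isSemisimpleModule_quot_jacobson
  have hJJ : ∀ (M : Type u) [AddCommGroup M] [Module A M],
      J • (J • (⊤ : Submodule A M)) = ⊥ := by
    intro M _ _
    rw [← Submodule.smul_assoc, Ideal.smul_eq_mul, hJ2, Submodule.bot_smul]
  have ssubW : ∀ (M : Type u) [AddCommGroup M] [Module A M] (W : Submodule A M),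
      W ≤ J • ⊤ → IsSemisimpleModule A ↥W := by
    intro M _ _ W hW
    refine isSemisimpleModule_of_annihilated J hqss ?_
    intro a ha x
    have hx : a • (x : M) ∈ (⊥ : Submodule A M) := by
      rw [← hJJ M]; exact Submodule.smul_mem_smul ha (hW x.2)
    exact Subtype.ext (by simpa using hx)
  have ssq : ∀ (M : Type u) [AddCommGroup M] [Module A M],
      IsSemisimpleModule A (M ⧸ (J • ⊤ : Submodule A M)) := by
    intro M _ _
    refine isSemisimpleModule_of_annihilated J hqss ?_
    intro a ha m
    obtain ⟨x, rfl⟩ := Submodule.Quotient.mk_surjective _ m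
    rw [← Submodule.Quotient.mk_smul, Submodule.Quotient.mk_eq_zero]
    exact Submodule.smul_mem_smul ha Submodule.mem_top
  constructor
  · rintro ⟨hnsm, hnse, hfac⟩
    have hfne : f ≠ 0 := by
      intro h0
      rcases hfac U 0 0 (by rw [h0]; ext u; simp) with ⟨σ, hσ⟩ | ⟨σ, hσ⟩
      · obtain ⟨u, hu⟩ := exists_ne (0 : U)
        have h1 := LinearMap.ext_iff.mp hσ u
        simp only [LinearMap.comp_apply, LinearMap.zero_apply, map_zero,
          LinearMap.id_apply] at h1
        exact hu h1.symm
      · obtain ⟨n, hn⟩ := exists_ne (0 : N)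
        have h1 := LinearMap.ext_iff.mp hσ n
        simp only [LinearMap.comp_apply, LinearMap.zero_apply, map_zero,
          LinearMap.id_apply] at h1
        exact hn h1.symm
    have hfinj : Function.Injective f := by
      rw [← LinearMap.ker_eq_bot]
      rcases eq_bot_or_eq_top (LinearMap.ker f) with h | h
      · exact h
      · exact absurd (LinearMap.ker_eq_top.mp h) hfne
    -- the image of f lies in rad N
    have hfJ : LinearMap.range f ≤ (J • ⊤ : Submodule A N) := by
      by_contra hnot
      have hinj2 : Function.Injective ((J • ⊤ : Submodule A N).mkQ ∘ₗ f) := by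
        rw [← LinearMap.ker_eq_bot]
        rcases eq_bot_or_eq_top (LinearMap.ker ((J • ⊤ : Submodule A N).mkQ ∘ₗ f)) with h | h
        · exact h
        · exfalso
          apply hnot
          rintro x ⟨u, rfl⟩
          have h1 : ((J • ⊤ : Submodule A N).mkQ ∘ₗ f) u = 0 := by
            rw [← LinearMap.mem_ker, h]; trivial
          simpa [Submodule.Quotient.mk_eq_zero] using h1
      haveI := ssq N
      obtain ⟨r, hr⟩ := exists_retraction ((J • ⊤ : Submodule A N).mkQ ∘ₗ f) hinj2
      exact hnsm ⟨r ∘ₗ (J • ⊤ : Submodule A N).mkQ, by rw [LinearMap.comp_assoc]; exact hr⟩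
    obtain ⟨n, p, hp⟩ := Module.Finite.exists_fin' A N
    have hmapJ : Submodule.map p (J • ⊤ : Submodule A (Fin n → A)) =
        (J • ⊤ : Submodule A N) := by
      rw [Submodule.map_smul'', Submodule.map_top, LinearMap.range_eq_top.mpr hp]
    set Q : Submodule A (Fin n → A) :=
      (J • ⊤ : Submodule A (Fin n → A)) ⊓ Submodule.comap p (LinearMap.range f) with hQdef
    have hQmap : Submodule.map p Q = LinearMap.range f := by
      apply le_antisymm
      · rintro y ⟨x, hx, rfl⟩; exact hx.2
      · rintro y hy
        have h1 : y ∈ (J • ⊤ : Submodule A N) := hfJ hy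
        rw [← hmapJ] at h1
        obtain ⟨x, hx, rfl⟩ := h1
        exact ⟨x, ⟨hx, hy⟩, rfl⟩
    haveI hQss : IsSemisimpleModule A ↥Q := ssubW (Fin n → A) Q inf_le_left
    set pQ : ↥Q →ₗ[A] N := p ∘ₗ Q.subtype with hpQdef
    obtain ⟨Cq, hCq⟩ := exists_isCompl (LinearMap.ker pQ)
    have hmemθ : ∀ c : ↥Cq, pQ (Cq.subtype c) ∈ LinearMap.range f := fun c => c.1.2.2
    set θ : ↥Cq →ₗ[A] ↥(LinearMap.range f) :=
      LinearMap.codRestrict (LinearMap.range f) (pQ ∘ₗ Cq.subtype) hmemθ with hθdef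
    have hθ0 : ∀ c : ↥Cq, θ c = 0 → c = 0 := by
      intro c hc
      have h1 : pQ c.1 = 0 := congrArg Subtype.val hc
      have h2 : (c.1 : ↥Q) ∈ LinearMap.ker pQ ⊓ Cq := ⟨h1, c.2⟩
      have h3 : (c.1 : ↥Q) = 0 := by
        have := hCq.disjoint.le_bot h2
        simpa using this
      exact Subtype.ext h3
    have hθinj : Function.Injective θ :=
      LinearMap.ker_eq_bot.mp
        ((Submodule.eq_bot_iff _).mpr fun c hc => hθ0 c (LinearMap.mem_ker.mp hc))
    have hθsurj : Function.Surjective θ := by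
      rintro ⟨y, hy⟩
      rw [← hQmap] at hy
      obtain ⟨q, hq, rfl⟩ := hy
      have hq' : (⟨q, hq⟩ : ↥Q) ∈ LinearMap.ker pQ ⊔ Cq := by
        rw [hCq.sup_eq_top]; trivial
      obtain ⟨k, hk, c, hc, hkc⟩ := Submodule.mem_sup.mp hq'
      refine ⟨⟨c, hc⟩, ?_⟩
      apply Subtype.ext
      show pQ c = p q
      have h1 : pQ (⟨q, hq⟩ : ↥Q) = p q := rfl
      rw [← h1, ← hkc, map_add]
      have h2 : pQ k = 0 := hk
      rw [h2, zero_add]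
    set eS := LinearEquiv.ofBijective θ ⟨hθinj, hθsurj⟩ with heS
    set ef := LinearEquiv.ofInjective f hfinj with hef
    set g : U →ₗ[A] (Fin n → A) :=
      Q.subtype ∘ₗ Cq.subtype ∘ₗ (eS.symm.toLinearMap ∘ₗ ef.toLinearMap) with hgdef
    have hpg : f = p ∘ₗ g := by
      ext u
      show f u = p (Q.subtype (Cq.subtype (eS.symm (ef u))))
      have h1 : p (Q.subtype (Cq.subtype (eS.symm (ef u)))) = (θ (eS.symm (ef u)) : N) := rfl
      have h2 : θ (eS.symm (ef u)) = eS (eS.symm (ef u)) := rfl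
      rw [h1, h2, eS.apply_symm_apply]
      rfl
    rcases hfac (Fin n → A) g p hpg with ⟨r, hr⟩ | ⟨s, hs⟩
    · exfalso
      have hgJ : ∀ u : U, g u ∈ (J • ⊤ : Submodule A (Fin n → A)) := by
        intro u
        have h2 : g u ∈ Q := (Cq.subtype (eS.symm (ef u))).2
        have h3 : Q ≤ (J • ⊤ : Submodule A (Fin n → A)) := inf_le_left
        exact h3 h2
      have htop : (⊤ : Submodule A U) ≤ J • ⊤ := by
        intro u _
        have h1 : r (g u) = u := LinearMap.ext_iff.mp hr u
        have h2 : r (g u) ∈ Submodule.map r (J • ⊤ : Submodule A (Fin n → A)) :=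
          ⟨g u, hgJ u, rfl⟩
        rw [Submodule.map_smul''] at h2
        rw [← h1]
        exact Submodule.smul_mono le_rfl le_top h2
      have hbot : (⊤ : Submodule A U) = ⊥ := by
        have h1 : (⊤ : Submodule A U) = J • ⊤ := le_antisymm htop le_top
        calc (⊤ : Submodule A U) = J • ⊤ := h1
          _ = J • (J • ⊤) := congrArg (fun W => J • W) h1
          _ = ⊥ := hJJ U
      obtain ⟨u, hu⟩ := exists_ne (0 : U)
      have : u ∈ (⊥ : Submodule A U) := hbot ▸ Submodule.mem_top
      exact hu (by simpa using this)
    · have hproj : Module.Projective A N := Module.Projective.of_split s p hs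
      refine ⟨hfinj, hproj, ?_⟩
      intro hNs
      haveI := hNs
      have hrange : LinearMap.range f = ⊤ := by
        rcases eq_bot_or_eq_top (LinearMap.range f) with h | h
        · exfalso
          obtain ⟨u, hu⟩ := exists_ne (0 : U)
          have h1 : f u ∈ (⊥ : Submodule A N) := h ▸ LinearMap.mem_range_self f u
          have h2 : f u = 0 := by simpa using h1
          exact hu (hfinj (by rw [h2, map_zero]))
        · exact h
      have hbij : Function.Bijective f := ⟨hfinj, LinearMap.range_eq_top.mp hrange⟩
      exact hnsm ⟨(LinearEquiv.ofBijective f hbij).symm.toLinearMap, by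
        ext u
        exact (LinearEquiv.ofBijective f hbij).symm_apply_apply u⟩
  · rintro ⟨hfinj, hproj, hnsimple⟩
    haveI := hproj
    have hnotsurj : ¬ Function.Surjective f := by
      intro hs
      exact hnsimple (@IsSimpleModule.congr A _ N _ _ U _ _
        (LinearEquiv.ofBijective f ⟨hfinj, hs⟩).symm hUsimple)
    refine ⟨?_, ?_, ?_⟩
    · rintro ⟨r, hr⟩
      have hidem : (f ∘ₗ r) ∘ₗ (f ∘ₗ r) = f ∘ₗ r := by
        ext x
        show f (r (f (r x))) = f (r x)
        congr 1
        exact LinearMap.ext_iff.mp hr (r x)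
      rcases hNindec.2 (f ∘ₗ r) hidem with h0 | hid
      · obtain ⟨u, hu⟩ := exists_ne (0 : U)
        apply hu
        apply hfinj
        rw [map_zero]
        have h1 : f u = (f ∘ₗ r) (f u) := by
          show f u = f (r (f u))
          congr 1
          exact (LinearMap.ext_iff.mp hr u).symm
        rw [h1, h0]
        rfl
      · apply hnotsurj
        intro x
        exact ⟨r x, LinearMap.ext_iff.mp hid x⟩
    · rintro ⟨s, hs⟩
      exact hnotsurj fun x => ⟨s x, LinearMap.ext_iff.mp hs x⟩
    · intro L _ _ _ g h hfgh
      by_cases hsurj : Function.Surjective h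
      · right
        obtain ⟨σ, hσ⟩ := Module.projective_lifting_property h LinearMap.id hsurj
        exact ⟨σ, hσ⟩
      · left
        haveI := ssq N
        -- N ⧸ rad N is nontrivial
        have hradlt : (J • ⊤ : Submodule A N) < ⊤ := by
          rcases lt_or_eq_of_le (le_top : (J • ⊤ : Submodule A N) ≤ ⊤) with hlt | heq
          · exact hlt
          · exfalso
            have hb : (⊤ : Submodule A N) = ⊥ := by
              calc (⊤ : Submodule A N) = J • ⊤ := heq.symm
                _ = J • (J • ⊤) := congrArg (fun W => J • W) heq.symm
                _ = ⊥ := hJJ N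
            obtain ⟨x, hx⟩ := exists_ne (0 : N)
            have : x ∈ (⊥ : Submodule A N) := hb ▸ Submodule.mem_top
            exact hx (by simpa using this)
        haveI hNqnt : Nontrivial (N ⧸ (J • ⊤ : Submodule A N)) :=
          Submodule.Quotient.nontrivial_iff.mpr hradlt.ne
        -- N ⧸ rad N is a simple module
        have hNqsimple : IsSimpleModule A (N ⧸ (J • ⊤ : Submodule A N)) := by
          haveI : Nontrivial (Submodule A (N ⧸ (J • ⊤ : Submodule A N))) :=
            ⟨⊥, ⊤, fun hbt => by
              obtain ⟨x, hx⟩ := exists_ne (0 : N ⧸ (J • ⊤ : Submodule A N))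
              have : x ∈ (⊥ : Submodule A (N ⧸ (J • ⊤ : Submodule A N))) :=
                hbt ▸ Submodule.mem_top
              exact hx (by simpa using this)⟩
          refine { toNontrivial := inferInstance, eq_bot_or_eq_top := fun W => ?_ }
          obtain ⟨W', hW'⟩ := exists_isCompl W
          set mk := (J • ⊤ : Submodule A N).mkQ with hmkdef
          set pr : (N ⧸ (J • ⊤ : Submodule A N)) →ₗ[A] (N ⧸ (J • ⊤ : Submodule A N)) :=
            W.subtype ∘ₗ Submodule.projectionOnto W W' hW' with hprdef
          have hpr_mem : ∀ x, pr x ∈ W := fun x =>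
            (Submodule.projectionOnto W W' hW' x).2
          have hpr_left : ∀ w : ↥W, pr (w : N ⧸ (J • ⊤ : Submodule A N)) = w := fun w => by
            show (Submodule.projectionOnto W W' hW' w : N ⧸ (J • ⊤ : Submodule A N)) = w
            rw [Submodule.projectionOnto_apply_left hW' w]
          obtain ⟨e, he⟩ := Module.projective_lifting_property mk (pr ∘ₗ mk)
            (Submodule.mkQ_surjective _)
          have hee : ∀ x : N, mk (e x) = pr (mk x) := fun x => LinearMap.ext_iff.mp he x
          have hpr_idem : ∀ y, pr (pr y) = pr y := fun y => hpr_left ⟨pr y, hpr_mem y⟩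
          have hue : ∀ x : N, (e ∘ₗ e - e) x ∈ (J • ⊤ : Submodule A N) := by
            intro x
            have h1 : mk (e (e x)) = mk (e x) := by
              rw [hee (e x), hee x, hpr_idem]
            have h2 : e (e x) - e x ∈ (J • ⊤ : Submodule A N) :=
              (Submodule.Quotient.eq _).mp h1
            simpa using h2
          have hcompzero : ∀ (φ ψ : N →ₗ[A] N),
              (∀ y, φ y ∈ (J • ⊤ : Submodule A N)) →
              (∀ y, ψ y ∈ (J • ⊤ : Submodule A N)) → φ ∘ₗ ψ = 0 := by
            intro φ ψ hφ hψ
            ext x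
            have h1 : φ (ψ x) ∈ Submodule.map φ (J • ⊤ : Submodule A N) := ⟨ψ x, hψ x, rfl⟩
            rw [Submodule.map_smul''] at h1
            have h2 : (J • Submodule.map φ (⊤ : Submodule A N) : Submodule A N) ≤
                J • (J • ⊤ : Submodule A N) := by
              refine Submodule.smul_mono le_rfl ?_
              rintro y ⟨z, -, rfl⟩
              exact hφ z
            have h3 := h2 h1
            rw [hJJ N] at h3
            simpa using h3
          have huu : ((e ∘ₗ e - e) ∘ₗ (e ∘ₗ e - e) : N →ₗ[A] N) = 0 :=
            hcompzero _ _ hue hue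
          -- pass to the endomorphism ring
          have huu' : ((e * e - e) * (e * e - e) : Module.End A N) = 0 := huu
          have hkey : ((3 * (e * e) - 2 * (e * e * e)) * (3 * (e * e) - 2 * (e * e * e))
              - (3 * (e * e) - 2 * (e * e * e)) : Module.End A N)
              = ((e * e - e) * (e * e - e)) * (4 * (e * e) - 4 * e - 3) := by
            noncomm_ring
          rw [huu', zero_mul] at hkey
          have hidem : ((3 * (e * e) - 2 * (e * e * e)) ∘ₗ (3 * (e * e) - 2 * (e * e * e))
              : N →ₗ[A] N) = 3 * (e * e) - 2 * (e * e * e) := by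
            have := sub_eq_zero.mp hkey
            exact this
          have hdiff : ∀ x : N, ((3 * (e * e) - 2 * (e * e * e) : Module.End A N) x - e x)
              ∈ (J • ⊤ : Submodule A N) := by
            intro x
            have hpoly : ((3 * (e * e) - 2 * (e * e * e)) - e : Module.End A N)
                = (e * e - e) * (1 - 2 * e) := by noncomm_ring
            have h1 : ((3 * (e * e) - 2 * (e * e * e) : Module.End A N) x - e x)
                = ((e * e - e) * (1 - 2 * e) : Module.End A N) x := by
              rw [← hpoly]; rfl
            rw [h1]
            exact hue (((1 - 2 * e) : Module.End A N) x)
          have he' : ∀ x : N, mk ((3 * (e * e) - 2 * (e * e * e) : Module.End A N) x)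
              = pr (mk x) := by
            intro x
            have h1 : mk ((3 * (e * e) - 2 * (e * e * e) : Module.End A N) x) = mk (e x) :=
              (Submodule.Quotient.eq _).mpr (hdiff x)
            rw [h1, hee]
          rcases hNindec.2 (3 * (e * e) - 2 * (e * e * e)) hidem with h0 | hid
          · left
            rw [eq_bot_iff]
            intro w hw
            have h1 : ∀ y : N ⧸ (J • ⊤ : Submodule A N), pr y = 0 := by
              intro y
              obtain ⟨x, rfl⟩ := Submodule.mkQ_surjective _ y
              show pr (mk x) = 0
              rw [← he' x, h0]
              simp
            have h2 : (w : N ⧸ (J • ⊤ : Submodule A N)) = pr w := (hpr_left ⟨w, hw⟩).symm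
            rw [h1] at h2
            simpa using h2
          · right
            rw [eq_top_iff]
            intro y _
            obtain ⟨x, rfl⟩ := Submodule.mkQ_surjective _ y
            have h1 : pr (mk x) = mk x := by
              rw [← he' x, hid]
              rfl
            show mk x ∈ W
            rw [← h1]
            exact hpr_mem (mk x)
        -- range h is contained in rad N
        have hh : LinearMap.range h ≤ (J • ⊤ : Submodule A N) := by
          rcases eq_bot_or_eq_top
            (Submodule.map (J • ⊤ : Submodule A N).mkQ (LinearMap.range h)) with hb | ht
          · intro x hx
            have h1 : (J • ⊤ : Submodule A N).mkQ x ∈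
                Submodule.map (J • ⊤ : Submodule A N).mkQ (LinearMap.range h) := ⟨x, hx, rfl⟩
            rw [hb] at h1
            have h2 : (J • ⊤ : Submodule A N).mkQ x = 0 := by simpa using h1
            rwa [Submodule.mkQ_apply, Submodule.Quotient.mk_eq_zero] at h2
          · exfalso
            apply hsurj
            have hsup : (J • ⊤ : Submodule A N) ⊔ LinearMap.range h = ⊤ := by
              rw [← Submodule.comap_map_mkQ (J • ⊤ : Submodule A N) (LinearMap.range h), ht]
              exact Submodule.comap_top _
            have hle2 : (⊤ : Submodule A N) ≤ LinearMap.range h := by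
              have h1 : (J • ⊤ : Submodule A N) = J • ((J • ⊤ : Submodule A N)
                  ⊔ LinearMap.range h) := by rw [hsup]
              calc (⊤ : Submodule A N) = (J • ⊤ : Submodule A N) ⊔ LinearMap.range h :=
                    hsup.symm
                _ = (J • ((J • ⊤ : Submodule A N) ⊔ LinearMap.range h))
                    ⊔ LinearMap.range h := by rw [← h1]
                _ = (J • (J • ⊤ : Submodule A N) ⊔ J • LinearMap.range h)
                    ⊔ LinearMap.range h := by rw [Submodule.smul_sup]
                _ = (⊥ ⊔ J • LinearMap.range h) ⊔ LinearMap.range h := by rw [hJJ N]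
                _ ≤ LinearMap.range h := by
                    rw [bot_sup_eq]
                    exact sup_le Submodule.smul_le_right le_rfl
            exact LinearMap.range_eq_top.mp (top_unique hle2)
        have hfle : ∀ u : U, f u ∈ (J • ⊤ : Submodule A N) := by
          intro u
          apply hh
          rw [hfgh]
          exact ⟨g u, rfl⟩
        set fc : U →ₗ[A] ↥(J • ⊤ : Submodule A N) :=
          LinearMap.codRestrict _ f hfle with hfcdef
        have hfcinj : Function.Injective fc := fun a b hab =>
          hfinj (congrArg Subtype.val hab)
        haveI := ssubW N (J • ⊤ : Submodule A N) le_rfl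
        obtain ⟨rq, hrq⟩ := exists_retraction fc hfcinj
        refine ⟨rq ∘ₗ LinearMap.codRestrict _ h (fun l => hh ⟨l, rfl⟩), ?_⟩
        ext u
        show rq (LinearMap.codRestrict _ h _ (g u)) = u
        have h1 : LinearMap.codRestrict (J • ⊤ : Submodule A N) h (fun l => hh ⟨l, rfl⟩) (g u)
            = fc u := by
          apply Subtype.ext
          show h (g u) = f u
          rw [hfgh]
          rfl
        rw [h1]
        exact LinearMap.ext_iff.mp hrq u
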